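/- Let p be a prime and f ∈ (F_p[t])[x] a polynomial that is monic of positive degree in x, and set g := Res_x(f, X^p − X) ∈ F_p[t]. Then f(t₀, x₀) ≠ 0 for all t₀, x₀ ∈ F_p if and only if g and T^p − T are coprime in F_p[T] (i.e., they generate the unit ideal). -/

import Mathlib

open Polynomial

open Matrix

/-- The Sylvester matrix of two polynomials `f` and `g` over a commutative ring:
a `(natDegree f + natDegree g) × (natDegree f + natDegree g)` matrix, whose first
`natDegree g` rows carry the shifted coefficient sequences of `f` (from the leading
coefficient down), and whose remaining `natDegree f` rows carry the shifted
coefficient sequences of `g`. -/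
noncomputable def sylvesterMatrix {R : Type*} [CommRing R] (f g : Polynomial R) :
    Matrix (Fin (f.natDegree + g.natDegree)) (Fin (f.natDegree + g.natDegree)) R :=
  Matrix.of fun i j =>
    if (i : ℕ) < g.natDegree then
      if (i : ℕ) ≤ (j : ℕ) ∧ (j : ℕ) ≤ (i : ℕ) + f.natDegree then
        f.coeff (f.natDegree + i - j)
      else 0
    else
      if (i : ℕ) - g.natDegree ≤ (j : ℕ) ∧ (j : ℕ) ≤ ((i : ℕ) - g.natDegree) + g.natDegree then
        g.coeff (g.natDegree + ((i : ℕ) - g.natDegree) - j)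
      else 0

/-- The _root_.resultant of two polynomials: the determinant of their Sylvester matrix. -/
noncomputable def resultant {R : Type*} [CommRing R] (f g : Polynomial R) : R :=
  (sylvesterMatrix f g).det

lemma sylvester_apply {R : Type*} [CommRing R] (f g : Polynomial R)
    (i j : Fin (f.natDegree + g.natDegree)) :
    sylvesterMatrix f g i j =
      (if (i : ℕ) < g.natDegree then f * X ^ (g.natDegree - 1 - (i : ℕ))
        else g * X ^ (f.natDegree - 1 - ((i : ℕ) - g.natDegree))).coeff
        (f.natDegree + g.natDegree - 1 - (j : ℕ)) := by
  have hi := i.isLt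
  have hj := j.isLt
  rcases lt_or_ge (i : ℕ) g.natDegree with h | h
  · rw [if_pos h]
    simp only [sylvesterMatrix, Matrix.of_apply, if_pos h, coeff_mul_X_pow']
    split_ifs with h1 h2 h2
    · congr 1; omega
    · exfalso; omega
    · rw [eq_comm]; apply coeff_eq_zero_of_natDegree_lt; push_neg at h1; omega
    · rfl
  · rw [if_neg (not_lt.mpr h)]
    simp only [sylvesterMatrix, Matrix.of_apply, if_neg (not_lt.mpr h), coeff_mul_X_pow']
    split_ifs with h1 h2 h2
    · congr 1; omega
    · exfalso; omega
    · rw [eq_comm]; apply coeff_eq_zero_of_natDegree_lt; push_neg at h1; omega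
    · rfl

noncomputable def polyA {R : Type*} [CommRing R] (m N : ℕ) (v : Fin N → R) : Polynomial R :=
  ∑ i : Fin N, if (i : ℕ) < m then C (v i) * X ^ (m - 1 - (i : ℕ)) else 0

noncomputable def polyB {R : Type*} [CommRing R] (n m N : ℕ) (v : Fin N → R) : Polynomial R :=
  ∑ i : Fin N, if (i : ℕ) < m then 0 else C (v i) * X ^ (n - 1 - ((i : ℕ) - m))

lemma polyA_coeff {R : Type*} [CommRing R] (m N : ℕ) (v : Fin N → R) (i0 : Fin N)
    (h : (i0 : ℕ) < m) : (polyA m N v).coeff (m - 1 - (i0 : ℕ)) = v i0 := by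
  rw [polyA, finset_sum_coeff]
  rw [Finset.sum_eq_single i0]
  · rw [if_pos h, coeff_C_mul, coeff_X_pow, if_pos rfl, mul_one]
  · intro i _ hne
    split_ifs with him
    · rw [coeff_C_mul, coeff_X_pow, if_neg (fun hc => hne (Fin.ext (by omega))), mul_zero]
    · exact coeff_zero _
  · intro hmem; exact absurd (Finset.mem_univ i0) hmem

lemma polyB_coeff {R : Type*} [CommRing R] (n m : ℕ) (v : Fin (n + m) → R) (i0 : Fin (n + m))
    (h : m ≤ (i0 : ℕ)) : (polyB n m (n + m) v).coeff (n - 1 - ((i0 : ℕ) - m)) = v i0 := by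
  have hi0 := i0.isLt
  rw [polyB, finset_sum_coeff]
  rw [Finset.sum_eq_single i0]
  · rw [if_neg (not_lt.mpr h), coeff_C_mul, coeff_X_pow, if_pos rfl, mul_one]
  · intro i _ hne
    have hi := i.isLt
    split_ifs with him
    · exact coeff_zero _
    · rw [coeff_C_mul, coeff_X_pow, if_neg (fun hc => hne (Fin.ext (by omega))), mul_zero]
  · intro hmem; exact absurd (Finset.mem_univ i0) hmem

lemma polyA_degree {R : Type*} [CommRing R] (m N : ℕ) (v : Fin N → R) :
    (polyA m N v).degree ≤ ((m - 1 : ℕ) : WithBot ℕ) := by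
  refine (degree_sum_le _ _).trans (Finset.sup_le fun i _ => ?_)
  split_ifs with h
  · refine (degree_mul_le _ _).trans ?_
    refine le_trans (add_le_add degree_C_le (Polynomial.degree_X_pow_le _)) ?_
    rw [zero_add]
    exact_mod_cast Nat.sub_le _ _
  · simp

lemma polyB_degree {R : Type*} [CommRing R] (n m N : ℕ) (v : Fin N → R) :
    (polyB n m N v).degree ≤ ((n - 1 : ℕ) : WithBot ℕ) := by
  refine (degree_sum_le _ _).trans (Finset.sup_le fun i _ => ?_)
  split_ifs with h
  · simp
  · refine (degree_mul_le _ _).trans ?_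
    refine le_trans (add_le_add degree_C_le (Polynomial.degree_X_pow_le _)) ?_
    rw [zero_add]
    exact_mod_cast Nat.sub_le _ _

lemma vecMul_sylvester {R : Type*} [CommRing R] (f g : Polynomial R)
    (v : Fin (f.natDegree + g.natDegree) → R) (j : Fin (f.natDegree + g.natDegree)) :
    (v ᵥ* sylvesterMatrix f g) j =
      (polyA g.natDegree _ v * f + polyB f.natDegree g.natDegree _ v * g).coeff
        (f.natDegree + g.natDegree - 1 - (j : ℕ)) := by
  have h0 : (v ᵥ* sylvesterMatrix f g) j = ∑ i, v i * sylvesterMatrix f g i j := by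
    simp [Matrix.vecMul, dotProduct]
  rw [h0, coeff_add, polyA, polyB, Finset.sum_mul, Finset.sum_mul,
    finset_sum_coeff, finset_sum_coeff, ← Finset.sum_add_distrib]
  refine Finset.sum_congr rfl fun i _ => ?_
  rw [sylvester_apply]
  split_ifs with h
  · rw [zero_mul, coeff_zero, add_zero, mul_assoc, mul_comm (X ^ _) f, coeff_C_mul]
  · rw [zero_mul, coeff_zero, zero_add, mul_assoc, mul_comm (X ^ _) g, coeff_C_mul]

lemma polyA_of_coeff {R : Type*} [CommRing R] (n m : ℕ) (q : Polynomial R) (hq : q.natDegree < m)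
    (v : Fin (n + m) → R) (hv : ∀ i : Fin (n + m), (i : ℕ) < m → v i = q.coeff (m - 1 - (i : ℕ))) :
    polyA m (n + m) v = q := by
  rw [polyA]
  have step1 : ∀ i : Fin (n + m),
      (if (i : ℕ) < m then C (v i) * X ^ (m - 1 - (i : ℕ)) else 0) =
      (fun k : ℕ => if k < m then C (q.coeff (m - 1 - k)) * X ^ (m - 1 - k) else 0) (i : ℕ) := by
    intro i
    by_cases h : (i : ℕ) < m
    · simp only [if_pos h, hv i h]
    · simp only [if_neg h]
  rw [Finset.sum_congr rfl (fun i _ => step1 i),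
    Fin.sum_univ_eq_sum_range (fun k : ℕ => if k < m then C (q.coeff (m - 1 - k)) * X ^ (m - 1 - k) else 0)]
  rw [Nat.add_comm n m, Finset.sum_range_add]
  have h2 : ∑ i ∈ Finset.range n,
      (if m + i < m then C (q.coeff (m - 1 - (m + i))) * X ^ (m - 1 - (m + i)) else 0) = 0 :=
    Finset.sum_eq_zero fun i _ => if_neg (by omega)
  rw [h2, add_zero]
  have h3 : ∀ i ∈ Finset.range m,
      (if i < m then C (q.coeff (m - 1 - i)) * X ^ (m - 1 - i) else 0) =
      (fun k => C (q.coeff k) * X ^ k) (m - 1 - i) := fun i hi =>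
    if_pos (Finset.mem_range.mp hi)
  rw [Finset.sum_congr rfl h3, Finset.sum_range_reflect (fun k => C (q.coeff k) * X ^ k) m]
  conv_rhs => rw [q.as_sum_range' m hq]
  exact Finset.sum_congr rfl fun i _ => C_mul_X_pow_eq_monomial

lemma polyB_of_coeff {R : Type*} [CommRing R] (n m : ℕ) (q : Polynomial R) (hq : q.natDegree < n)
    (v : Fin (n + m) → R)
    (hv : ∀ i : Fin (n + m), m ≤ (i : ℕ) → v i = q.coeff (n - 1 - ((i : ℕ) - m))) :
    polyB n m (n + m) v = q := by
  rw [polyB]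
  have step1 : ∀ i : Fin (n + m),
      (if (i : ℕ) < m then 0 else C (v i) * X ^ (n - 1 - ((i : ℕ) - m))) =
      (fun k : ℕ => if k < m then 0 else C (q.coeff (n - 1 - (k - m))) * X ^ (n - 1 - (k - m))) (i : ℕ) := by
    intro i
    by_cases h : (i : ℕ) < m
    · simp only [if_pos h]
    · simp only [if_neg h, hv i (not_lt.mp h)]
  rw [Finset.sum_congr rfl (fun i _ => step1 i),
    Fin.sum_univ_eq_sum_range
      (fun k : ℕ => if k < m then 0 else C (q.coeff (n - 1 - (k - m))) * X ^ (n - 1 - (k - m)))]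
  rw [Nat.add_comm n m, Finset.sum_range_add]
  have h2 : ∑ i ∈ Finset.range m,
      (if i < m then (0 : Polynomial R) else C (q.coeff (n - 1 - (i - m))) * X ^ (n - 1 - (i - m))) = 0 :=
    Finset.sum_eq_zero fun i hi => if_pos (Finset.mem_range.mp hi)
  rw [h2, zero_add]
  have h3 : ∀ i ∈ Finset.range n,
      (if m + i < m then (0 : Polynomial R)
        else C (q.coeff (n - 1 - (m + i - m))) * X ^ (n - 1 - (m + i - m))) =
      (fun k => C (q.coeff k) * X ^ k) (n - 1 - i) := by
    intro i hi
    rw [if_neg (by omega)]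
    simp only [Nat.add_sub_cancel_left]
  rw [Finset.sum_congr rfl h3, Finset.sum_range_reflect (fun k => C (q.coeff k) * X ^ k) n]
  conv_rhs => rw [q.as_sum_range' n hq]
  exact Finset.sum_congr rfl fun i _ => C_mul_X_pow_eq_monomial

lemma resultant_eq_zero_iff {K : Type*} [Field K] (f g : Polynomial K)
    (hf : f.Monic) (hg : g.Monic) (hn : 0 < f.natDegree) (hm : 0 < g.natDegree) :
    _root_.resultant f g = 0 ↔ ¬ IsCoprime f g := by
  classical
  rw [_root_.resultant, ← Matrix.exists_vecMul_eq_zero_iff]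
  constructor
  · rintro ⟨v, hv, hvM⟩ hcop
    set A := polyA g.natDegree (f.natDegree + g.natDegree) v with hA
    set B := polyB f.natDegree g.natDegree (f.natDegree + g.natDegree) v with hB
    have hdegsum : (A * f + B * g).degree < ((f.natDegree + g.natDegree : ℕ) : WithBot ℕ) := by
      refine (degree_add_le _ _).trans_lt (max_lt ?_ ?_)
      · refine (degree_mul_le _ _).trans_lt ?_
        calc A.degree + f.degree
            ≤ ((g.natDegree - 1 : ℕ) : WithBot ℕ) + ((f.natDegree : ℕ) : WithBot ℕ) :=
              add_le_add (polyA_degree _ _ _) degree_le_natDegree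
          _ = (((g.natDegree - 1) + f.natDegree : ℕ) : WithBot ℕ) := by
              rw [Nat.cast_add]
          _ < _ := by
              exact_mod_cast (by omega : g.natDegree - 1 + f.natDegree <
                f.natDegree + g.natDegree)
      · refine (degree_mul_le _ _).trans_lt ?_
        calc B.degree + g.degree
            ≤ ((f.natDegree - 1 : ℕ) : WithBot ℕ) + ((g.natDegree : ℕ) : WithBot ℕ) :=
              add_le_add (polyB_degree _ _ _ _) degree_le_natDegree
          _ = (((f.natDegree - 1) + g.natDegree : ℕ) : WithBot ℕ) := by
              rw [Nat.cast_add]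
          _ < _ := by
              exact_mod_cast (by omega : f.natDegree - 1 + g.natDegree <
                f.natDegree + g.natDegree)
    have hP : A * f + B * g = 0 := by
      ext k
      rw [coeff_zero]
      by_cases hk : k < f.natDegree + g.natDegree
      · have hj := congrFun hvM ⟨f.natDegree + g.natDegree - 1 - k, by omega⟩
        rw [vecMul_sylvester] at hj
        simpa [show f.natDegree + g.natDegree - 1 -
            (f.natDegree + g.natDegree - 1 - k) = k by omega] using hj
      · exact coeff_eq_zero_of_degree_lt
          (hdegsum.trans_le (by exact_mod_cast (by omega : f.natDegree + g.natDegree ≤ k)))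
    have hgA : g ∣ A := by
      refine (hcop.symm).dvd_of_dvd_mul_right ⟨-B, ?_⟩
      have hAf : A * f = -(B * g) := eq_neg_of_add_eq_zero_left hP
      rw [hAf]; ring
    have hA0 : A = 0 := by
      refine eq_zero_of_dvd_of_degree_lt hgA ((polyA_degree _ _ _).trans_lt ?_)
      rw [degree_eq_natDegree hg.ne_zero]
      exact_mod_cast (by omega : g.natDegree - 1 < g.natDegree)
    have hB0 : B = 0 := by
      have h := hP
      rw [hA0, zero_mul, zero_add, mul_eq_zero] at h
      exact h.resolve_right hg.ne_zero
    obtain ⟨i0, hi0⟩ := Function.ne_iff.mp hv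
    rcases lt_or_ge (i0 : ℕ) g.natDegree with h | h
    · refine hi0 ?_
      rw [← polyA_coeff g.natDegree (f.natDegree + g.natDegree) v i0 h, ← hA, hA0, coeff_zero]
      rfl
    · refine hi0 ?_
      rw [← polyB_coeff f.natDegree g.natDegree v i0 h, ← hB, hB0, coeff_zero]
      rfl
  · intro hcop
    have hfne := hf.ne_zero
    have hgne := hg.ne_zero
    have hdu : ¬ IsUnit (EuclideanDomain.gcd f g) :=
      fun h => hcop (EuclideanDomain.gcd_isUnit_iff.mp h)
    obtain ⟨f1, hf1⟩ := EuclideanDomain.gcd_dvd_left f g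
    obtain ⟨g1, hg1⟩ := EuclideanDomain.gcd_dvd_right f g
    set d := EuclideanDomain.gcd f g with hd
    have hd0 : d ≠ 0 := fun h => hfne (by rw [hf1, h, zero_mul])
    have hf10 : f1 ≠ 0 := fun h => hfne (by rw [hf1, h, mul_zero])
    have hg10 : g1 ≠ 0 := fun h => hgne (by rw [hg1, h, mul_zero])
    have hddeg : 0 < d.natDegree := by
      refine Nat.pos_of_ne_zero fun h0 => hdu ?_
      rw [Polynomial.eq_C_of_natDegree_eq_zero h0]
      refine isUnit_C.mpr (isUnit_iff_ne_zero.mpr fun hc => hd0 ?_)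
      rw [Polynomial.eq_C_of_natDegree_eq_zero h0, hc, map_zero]
    have hg1deg : g1.natDegree < g.natDegree := by
      have h := natDegree_mul hd0 hg10
      rw [← hg1] at h
      omega
    have hf1deg : f1.natDegree < f.natDegree := by
      have h := natDegree_mul hd0 hf10
      rw [← hf1] at h
      omega
    refine ⟨fun i => if (i : ℕ) < g.natDegree then g1.coeff (g.natDegree - 1 - (i : ℕ))
      else (-f1).coeff (f.natDegree - 1 - ((i : ℕ) - g.natDegree)), ?_, ?_⟩
    · intro h0
      have hA := polyA_of_coeff f.natDegree g.natDegree g1 hg1deg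
        (fun i => if (i : ℕ) < g.natDegree then g1.coeff (g.natDegree - 1 - (i : ℕ))
          else (-f1).coeff (f.natDegree - 1 - ((i : ℕ) - g.natDegree)))
        (fun i hi => if_pos hi)
      apply hg10
      rw [← hA, h0, polyA]
      exact Finset.sum_eq_zero fun i _ => by split_ifs <;> simp
    · funext j
      rw [vecMul_sylvester,
        polyA_of_coeff f.natDegree g.natDegree g1 hg1deg _ (fun i hi => if_pos hi),
        polyB_of_coeff f.natDegree g.natDegree (-f1) (by simpa using hf1deg) _
          (fun i hi => if_neg (not_lt.mpr hi))]
      have hz : g1 * f + -f1 * g = 0 := by rw [hf1, hg1]; ring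
      rw [hz, coeff_zero, Pi.zero_apply]

lemma resultant_map {R S : Type*} [CommRing R] [CommRing S] (φ : R →+* S)
    (f g : Polynomial R) (hf : (f.map φ).natDegree = f.natDegree)
    (hg : (g.map φ).natDegree = g.natDegree) :
    _root_.resultant (f.map φ) (g.map φ) = φ (_root_.resultant f g) := by
  have hd : (f.map φ).natDegree + (g.map φ).natDegree = f.natDegree + g.natDegree := by
    rw [hf, hg]
  rw [_root_.resultant, _root_.resultant, RingHom.map_det,
    ← Matrix.det_reindex_self (finCongr hd.symm) ((RingHom.mapMatrix φ) (sylvesterMatrix f g))]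
  congr 1
  ext i j
  simp only [Matrix.reindex_apply, Matrix.submatrix_apply, RingHom.mapMatrix_apply,
    Matrix.map_apply, sylvesterMatrix, Matrix.of_apply, finCongr_symm_apply, Fin.coe_cast,
    hf, hg, coeff_map]
  split_ifs <;> simp

lemma isCoprime_X_pow_card_sub_X_iff (p : ℕ) [Fact p.Prime] (q : Polynomial (ZMod p)) :
    IsCoprime q (X ^ p - X) ↔ ∀ a : ZMod p, q.eval a ≠ 0 := by
  have hp2 : 1 < p := (Fact.out : p.Prime).one_lt
  constructor
  · rintro ⟨u, w, huv⟩ a ha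
    have h := congrArg (eval a) huv
    simp [ha, ZMod.pow_card] at h
  · intro h
    rw [← EuclideanDomain.gcd_isUnit_iff]
    by_contra hdu
    set d := EuclideanDomain.gcd q (X ^ p - X) with hd
    have hdvd2 : d ∣ X ^ p - X := EuclideanDomain.gcd_dvd_right _ _
    have hne : (X ^ p - X : Polynomial (ZMod p)) ≠ 0 :=
      FiniteField.X_pow_card_sub_X_ne_zero _ hp2
    have hsplits : Splits (X ^ p - X : Polynomial (ZMod p)) := by
      rw [Polynomial.splits_iff_card_roots]
      have hcard : Fintype.card (ZMod p) = p := ZMod.card p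
      have hroots := FiniteField.roots_X_pow_card_sub_X (ZMod p)
      rw [hcard] at hroots
      rw [hroots, FiniteField.X_pow_card_sub_X_natDegree_eq _ hp2]
      simpa using hcard
    have hddeg : d.degree ≠ 0 := fun h => hdu (Polynomial.isUnit_iff_degree_eq_zero.mpr h)
    obtain ⟨a, ha⟩ := Splits.exists_eval_eq_zero
      (Splits.of_dvd hsplits hne hdvd2) hddeg
    refine h a ?_
    obtain ⟨e, he⟩ : d ∣ q := EuclideanDomain.gcd_dvd_left _ _
    rw [he, eval_mul]
    rw [show eval a d = 0 by simpa using ha, zero_mul]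


lemma eval_eval_C {R : Type*} [CommRing R] (f : Polynomial (Polynomial R)) (t x : R) :
    (f.eval (C x)).eval t = (f.map (evalRingHom t)).eval x := by
  rw [eval_map]
  have h : (f.eval (C x)).eval t = evalRingHom t (eval₂ (RingHom.id _) (C x) f) := rfl
  rw [h, hom_eval₂]
  simp


/-- For monic `f ∈ (F_p[t])[x]` of positive degree and `g = Res_x(f, X^p − X)`:
`f` has no zero on `F_p × F_p` iff `g` and `T^p − T` are coprime in `F_p[T]`. -/
theorem no_rational_zero_iff_coprime (p : ℕ) [Fact p.Prime]
    (f : Polynomial (Polynomial (ZMod p))) (hmonic : f.Monic) (hdeg : 0 < f.natDegree) :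
    (∀ t₀ x₀ : ZMod p, (f.eval (C x₀)).eval t₀ ≠ 0) ↔
      IsCoprime (_root_.resultant f (X ^ p - X)) (X ^ p - X : Polynomial (ZMod p)) := by
  have hp2 : 1 < p := (Fact.out : p.Prime).one_lt
  have hXm : (X ^ p - X : Polynomial (ZMod p)).Monic :=
    monic_X_pow_sub (by rw [degree_X]; exact_mod_cast hp2)
  have hXd : (X ^ p - X : Polynomial (ZMod p)).natDegree = p :=
    FiniteField.X_pow_card_sub_X_natDegree_eq _ hp2
  have key : ∀ t₀ : ZMod p,
      ((_root_.resultant f (X ^ p - X)).eval t₀ ≠ 0 ↔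
        ∀ x₀ : ZMod p, (f.eval (C x₀)).eval t₀ ≠ 0) := by
    intro t₀
    set φ := evalRingHom (R := ZMod p) t₀ with hφ
    have hmap : (X ^ p - X : Polynomial (Polynomial (ZMod p))).map φ
        = (X ^ p - X : Polynomial (ZMod p)) := by
      simp [Polynomial.map_sub, Polynomial.map_pow, Polynomial.map_X]
    have hXd2 : (X ^ p - X : Polynomial (Polynomial (ZMod p))).natDegree = p := by
      have h1 : (X : (Polynomial (ZMod p))[X]).degree
          < ((X : (Polynomial (ZMod p))[X]) ^ p).degree := by
        rw [degree_X_pow, degree_X]; exact_mod_cast hp2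
      rw [natDegree_eq_of_degree_eq (degree_sub_eq_left_of_degree_lt h1), natDegree_X_pow]
    have hres := resultant_map φ f (X ^ p - X) (hmonic.natDegree_map φ)
      (by rw [hmap, hXd, hXd2])
    rw [hmap] at hres
    have heval : (_root_.resultant f (X ^ p - X)).eval t₀
        = _root_.resultant (f.map φ) (X ^ p - X : Polynomial (ZMod p)) := by
      rw [hres, hφ, coe_evalRingHom]  -- φ applied
    rw [heval, ne_eq,
      resultant_eq_zero_iff _ _ (hmonic.map φ) hXm
        (by rw [hmonic.natDegree_map]; exact hdeg) (by rw [hXd]; omega),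
      not_not, isCoprime_X_pow_card_sub_X_iff]
    exact forall_congr' fun x₀ => by rw [eval_eval_C]
  rw [isCoprime_X_pow_card_sub_X_iff]
  constructor
  · intro h t₀
    exact (key t₀).mpr fun x₀ => h t₀ x₀
  · intro h t₀ x₀
    exact (key t₀).mp (h t₀) x₀
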